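/- Let d ≥ 2 be an integer. For z ∈ ℝ^d with z_d > 0 and r_{d−1} := (z₁² + ⋯ + z_{d−1}²)^{1/2} > 0, setting g(z) := arsinh(r_{d−1}/z_d), the function f = g² satisfies 2 ≤ z_d² · (∂²/∂z₁² + ⋯ + ∂²/∂z_d²) f(z) ≤ 2(d−1) + 2·g(z). -/

import Mathlib

open Real Finset

lemma fx_deriv (c h : ℝ) (hh : 0 < h) (t : ℝ) (ht : 0 < t ^ 2 + c) :
    HasDerivAt (fun t : ℝ => (Real.arsinh (Real.sqrt (t ^ 2 + c) / h)) ^ 2)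
      (2 * Real.arsinh (Real.sqrt (t ^ 2 + c) / h) * t /
        (Real.sqrt (t ^ 2 + c) * Real.sqrt (h ^ 2 + (t ^ 2 + c)))) t := by
  have hρ : 0 < Real.sqrt (t ^ 2 + c) := Real.sqrt_pos.2 ht
  have hs : 0 < Real.sqrt (h ^ 2 + (t ^ 2 + c)) := Real.sqrt_pos.2 (by positivity)
  have h1 : HasDerivAt (fun y : ℝ => y ^ 2 + c) (2 * t) t := by
    simpa using (hasDerivAt_pow 2 t).add_const c
  have h2 := (h1.sqrt (ne_of_gt ht)).div_const h
  have h4 : HasDerivAt (fun t : ℝ => (Real.arsinh (Real.sqrt (t ^ 2 + c) / h)) ^ 2) _ t :=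
    (h2.arsinh).pow 2
  have key : Real.sqrt (1 + (Real.sqrt (t ^ 2 + c) / h) ^ 2)
      = Real.sqrt (h ^ 2 + (t ^ 2 + c)) / h := by
    rw [div_pow, Real.sq_sqrt ht.le]
    rw [show (1 : ℝ) + (t ^ 2 + c) / h ^ 2 = (h ^ 2 + (t ^ 2 + c)) / h ^ 2 by
      field_simp]
    rw [Real.sqrt_div (by positivity), Real.sqrt_sq hh.le]
  rw [key] at h4
  convert h4 using 1
  simp only [smul_eq_mul, pow_one]
  field_simp
  ring

lemma fx_deriv2 (c h : ℝ) (hh : 0 < h) (x : ℝ) (hx : 0 < x ^ 2 + c) :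
    deriv (deriv (fun t : ℝ => (Real.arsinh (Real.sqrt (t ^ 2 + c) / h)) ^ 2)) x
      = 2 * x ^ 2 / (Real.sqrt (x ^ 2 + c) ^ 2 * Real.sqrt (h ^ 2 + (x ^ 2 + c)) ^ 2)
        + 2 * Real.arsinh (Real.sqrt (x ^ 2 + c) / h) /
            (Real.sqrt (x ^ 2 + c) * Real.sqrt (h ^ 2 + (x ^ 2 + c)))
        - 2 * Real.arsinh (Real.sqrt (x ^ 2 + c) / h) * x ^ 2 *
            (Real.sqrt (h ^ 2 + (x ^ 2 + c)) ^ 2 + Real.sqrt (x ^ 2 + c) ^ 2) /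
            (Real.sqrt (x ^ 2 + c) ^ 3 * Real.sqrt (h ^ 2 + (x ^ 2 + c)) ^ 3) := by
  have hρ : 0 < Real.sqrt (x ^ 2 + c) := Real.sqrt_pos.2 hx
  have hs : 0 < Real.sqrt (h ^ 2 + (x ^ 2 + c)) := Real.sqrt_pos.2 (by positivity)
  have hopen : IsOpen {t : ℝ | 0 < t ^ 2 + c} :=
    isOpen_lt continuous_const (by continuity)
  have hev : deriv (fun t : ℝ => (Real.arsinh (Real.sqrt (t ^ 2 + c) / h)) ^ 2)
      =ᶠ[nhds x] fun t => 2 * Real.arsinh (Real.sqrt (t ^ 2 + c) / h) * t /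
      (Real.sqrt (t ^ 2 + c) * Real.sqrt (h ^ 2 + (t ^ 2 + c))) := by
    filter_upwards [hopen.mem_nhds hx] with t ht using (fx_deriv c h hh t ht).deriv
  rw [hev.deriv_eq]
  have h1 : HasDerivAt (fun y : ℝ => y ^ 2 + c) (2 * x) x := by
    simpa using (hasDerivAt_pow 2 x).add_const c
  have hρ' := h1.sqrt (ne_of_gt hx)
  have hs' := (h1.const_add (h ^ 2)).sqrt (by positivity)
  have key : Real.sqrt (1 + (Real.sqrt (x ^ 2 + c) / h) ^ 2)
      = Real.sqrt (h ^ 2 + (x ^ 2 + c)) / h := by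
    rw [div_pow, Real.sq_sqrt hx.le]
    rw [show (1 : ℝ) + (x ^ 2 + c) / h ^ 2 = (h ^ 2 + (x ^ 2 + c)) / h ^ 2 by field_simp]
    rw [Real.sqrt_div (by positivity), Real.sqrt_sq hh.le]
  have harsinh := ((h1.sqrt (ne_of_gt hx)).div_const h).arsinh
  rw [key] at harsinh
  have hN : HasDerivAt (fun t : ℝ => 2 * Real.arsinh (Real.sqrt (t ^ 2 + c) / h) * t)
      ((2 * ((Real.sqrt (h ^ 2 + (x ^ 2 + c)) / h)⁻¹ • (2 * x / (2 * Real.sqrt (x ^ 2 + c)) / h))) * x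
        + 2 * Real.arsinh (Real.sqrt (x ^ 2 + c) / h) * 1) x :=
    (harsinh.const_mul 2).mul (hasDerivAt_id x)
  have hD : HasDerivAt (fun t : ℝ => Real.sqrt (t ^ 2 + c) * Real.sqrt (h ^ 2 + (t ^ 2 + c)))
      ((2 * x / (2 * Real.sqrt (x ^ 2 + c))) * Real.sqrt (h ^ 2 + (x ^ 2 + c))
        + Real.sqrt (x ^ 2 + c) * (2 * x / (2 * Real.sqrt (h ^ 2 + (x ^ 2 + c))))) x :=
    hρ'.mul hs'
  have hq : HasDerivAt (fun t : ℝ => 2 * Real.arsinh (Real.sqrt (t ^ 2 + c) / h) * t /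
      (Real.sqrt (t ^ 2 + c) * Real.sqrt (h ^ 2 + (t ^ 2 + c)))) _ x := hN.div hD (by positivity)
  rw [hq.deriv]
  simp only [smul_eq_mul]
  set p := Real.sqrt (x ^ 2 + c) with hp
  set q := Real.sqrt (h ^ 2 + (x ^ 2 + c)) with hqq
  set a := Real.arsinh (p / h) with ha
  clear_value p q a
  have h3 : p ≠ 0 := ne_of_gt hρ
  have h4 : q ≠ 0 := ne_of_gt hs
  have h5 : h ≠ 0 := ne_of_gt hh
  field_simp

lemma fh_deriv (a : ℝ) (ha : 0 < a) (t : ℝ) (ht : 0 < t) :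
    HasDerivAt (fun t : ℝ => (Real.arsinh (a / t)) ^ 2)
      (-(2 * a * Real.arsinh (a / t)) / (t * Real.sqrt (t ^ 2 + a ^ 2))) t := by
  have hs : 0 < Real.sqrt (t ^ 2 + a ^ 2) := Real.sqrt_pos.2 (by positivity)
  have h1 : HasDerivAt (fun y : ℝ => a / y) (-(a / t ^ 2)) t := by
    simpa [div_eq_mul_inv, neg_div, mul_div_assoc] using
      ((hasDerivAt_id t).inv (ne_of_gt ht)).const_mul a
  have h4 : HasDerivAt (fun t : ℝ => (Real.arsinh (a / t)) ^ 2) _ t := (h1.arsinh).pow 2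
  have key : Real.sqrt (1 + (a / t) ^ 2) = Real.sqrt (t ^ 2 + a ^ 2) / t := by
    rw [div_pow]
    rw [show (1 : ℝ) + a ^ 2 / t ^ 2 = (t ^ 2 + a ^ 2) / t ^ 2 by field_simp]
    rw [Real.sqrt_div (by positivity), Real.sqrt_sq ht.le]
  rw [key] at h4
  convert h4 using 1
  simp only [smul_eq_mul, pow_one]
  set q := Real.sqrt (t ^ 2 + a ^ 2) with hqq
  clear_value q
  have h3 : q ≠ 0 := ne_of_gt hs
  field_simp
  ring

lemma fh_deriv2 (a : ℝ) (ha : 0 < a) (h : ℝ) (hh : 0 < h) :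
    deriv (deriv (fun t : ℝ => (Real.arsinh (a / t)) ^ 2)) h
      = 2 * a ^ 2 / (h ^ 2 * Real.sqrt (h ^ 2 + a ^ 2) ^ 2)
        + 2 * a * Real.arsinh (a / h) * (Real.sqrt (h ^ 2 + a ^ 2) ^ 2 + h ^ 2) /
            (h ^ 2 * Real.sqrt (h ^ 2 + a ^ 2) ^ 3) := by
  have hs : 0 < Real.sqrt (h ^ 2 + a ^ 2) := Real.sqrt_pos.2 (by positivity)
  have hev : deriv (fun t : ℝ => (Real.arsinh (a / t)) ^ 2)
      =ᶠ[nhds h] fun t => -(2 * a * Real.arsinh (a / t)) / (t * Real.sqrt (t ^ 2 + a ^ 2)) := by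
    filter_upwards [isOpen_Ioi.mem_nhds (Set.mem_Ioi.2 hh)] with t ht
      using (fh_deriv a ha t ht).deriv
  rw [hev.deriv_eq]
  have h1 : HasDerivAt (fun y : ℝ => a / y) (-(a / h ^ 2)) h := by
    simpa [div_eq_mul_inv, neg_div, mul_div_assoc] using
      ((hasDerivAt_id h).inv (ne_of_gt hh)).const_mul a
  have key : Real.sqrt (1 + (a / h) ^ 2) = Real.sqrt (h ^ 2 + a ^ 2) / h := by
    rw [div_pow]
    rw [show (1 : ℝ) + a ^ 2 / h ^ 2 = (h ^ 2 + a ^ 2) / h ^ 2 by field_simp]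
    rw [Real.sqrt_div (by positivity), Real.sqrt_sq hh.le]
  have harsinh := h1.arsinh
  rw [key] at harsinh
  have hN : HasDerivAt (fun t : ℝ => -(2 * a * Real.arsinh (a / t)))
      (-(2 * a * ((Real.sqrt (h ^ 2 + a ^ 2) / h)⁻¹ • -(a / h ^ 2)))) h :=
    (harsinh.const_mul (2 * a)).neg
  have h2 : HasDerivAt (fun y : ℝ => y ^ 2 + a ^ 2) (2 * h) h := by
    simpa using (hasDerivAt_pow 2 h).add_const (a ^ 2)
  have hD : HasDerivAt (fun t : ℝ => t * Real.sqrt (t ^ 2 + a ^ 2))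
      (1 * Real.sqrt (h ^ 2 + a ^ 2) + h * (2 * h / (2 * Real.sqrt (h ^ 2 + a ^ 2)))) h :=
    (hasDerivAt_id h).mul (h2.sqrt (by positivity))
  have hq : HasDerivAt (fun t : ℝ => -(2 * a * Real.arsinh (a / t)) /
      (t * Real.sqrt (t ^ 2 + a ^ 2))) _ h := hN.div hD (by positivity)
  rw [hq.deriv]
  simp only [smul_eq_mul]
  set q := Real.sqrt (h ^ 2 + a ^ 2) with hqq
  set g := Real.arsinh (a / h) with hg
  clear_value q g
  have h3 : q ≠ 0 := ne_of_gt hs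
  have h5 : h ≠ 0 := ne_of_gt hh
  field_simp
  ring

set_option maxHeartbeats 2000000 in
/-- In the half-space model, with `g(z) = arsinh(r_{d-1}/z_d)` and `f = g²`, one has
`2 ≤ z_d² · Δ_e f(z) ≤ 2(d−1) + 2·g(z)`. -/
theorem laplacian_sq_dist_bounds (d : ℕ) (hd : 2 ≤ d) (z : Fin d → ℝ)
    (hz : 0 < z ⟨d - 1, by omega⟩)
    (hr : 0 < Real.sqrt (∑ i ∈ Finset.univ.filter (fun i : Fin d => (i : ℕ) < d - 1), z i ^ 2)) :
    2 ≤ (z ⟨d - 1, by omega⟩) ^ 2 *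
        (∑ i : Fin d,
          deriv (deriv (fun t : ℝ =>
            (Real.arsinh
              (Real.sqrt (∑ j ∈ Finset.univ.filter (fun j : Fin d => (j : ℕ) < d - 1),
                  (Function.update z i t) j ^ 2) /
                (Function.update z i t) ⟨d - 1, by omega⟩)) ^ 2)) (z i)) ∧
    (z ⟨d - 1, by omega⟩) ^ 2 *
        (∑ i : Fin d,
          deriv (deriv (fun t : ℝ =>
            (Real.arsinh
              (Real.sqrt (∑ j ∈ Finset.univ.filter (fun j : Fin d => (j : ℕ) < d - 1),
                  (Function.update z i t) j ^ 2) /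
                (Function.update z i t) ⟨d - 1, by omega⟩)) ^ 2)) (z i))
      ≤ 2 * ((d : ℝ) - 1)
          + 2 * Real.arsinh
              (Real.sqrt (∑ i ∈ Finset.univ.filter (fun i : Fin d => (i : ℕ) < d - 1), z i ^ 2) /
                z ⟨d - 1, by omega⟩) := by
  have hd1 : d - 1 < d := by omega
  set S := Finset.univ.filter (fun i : Fin d => (i : ℕ) < d - 1) with hS
  set h := z ⟨d - 1, hd1⟩ with hHdef
  have hh0 : 0 < h := hz
  set R := ∑ i ∈ S, z i ^ 2 with hR
  have hR0 : 0 ≤ R := Finset.sum_nonneg fun i _ => sq_nonneg _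
  set r := Real.sqrt R with hrdef
  have hrpos : 0 < r := hr
  have hr2 : r ^ 2 = R := Real.sq_sqrt hR0
  have hRpos : 0 < R := by rw [← hr2]; positivity
  set s := Real.sqrt (h ^ 2 + R) with hsdef
  have hspos : 0 < s := Real.sqrt_pos.2 (by positivity)
  have hs2 : s ^ 2 = h ^ 2 + R := Real.sq_sqrt (by positivity)
  set g := Real.arsinh (r / h) with hgdef
  have hg0 : 0 ≤ g := Real.arsinh_nonneg_iff.2 (by positivity)
  -- card of S
  have hcard : S.card = d - 1 := by
    have : S = Finset.map (Fin.castLEEmb (by omega : d - 1 ≤ d)) Finset.univ := by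
      rw [hS]; ext i
      simp only [mem_filter, mem_univ, true_and, Finset.mem_map, Fin.castLEEmb]
      constructor
      · intro hi
        exact ⟨⟨(i : ℕ), hi⟩, by simp [Fin.castLE, Fin.ext_iff]⟩
      · rintro ⟨j, rfl⟩
        simpa using j.isLt
    rw [this, Finset.card_map, Finset.card_univ, Fintype.card_fin]
  -- per-coordinate second derivatives, tangential directions
  have hstep : ∀ i ∈ S,
      deriv (deriv (fun t : ℝ =>
        (Real.arsinh (Real.sqrt (∑ j ∈ S, (Function.update z i t) j ^ 2) /
          (Function.update z i t) ⟨d - 1, hd1⟩)) ^ 2)) (z i)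
      = (z i) ^ 2 * (2 / (r ^ 2 * s ^ 2) - 2 * g * (s ^ 2 + r ^ 2) / (r ^ 3 * s ^ 3))
          + 2 * g / (r * s) := by
    intro i hi
    have hiv : (i : ℕ) < d - 1 := by
      rw [hS] at hi; exact (Finset.mem_filter.1 hi).2
    have hne : (⟨d - 1, hd1⟩ : Fin d) ≠ i := by
      simp only [ne_eq, Fin.ext_iff]; omega
    have hxc : z i ^ 2 + (R - z i ^ 2) = R := by ring
    have hfun : (fun t : ℝ =>
        (Real.arsinh (Real.sqrt (∑ j ∈ S, (Function.update z i t) j ^ 2) /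
          (Function.update z i t) ⟨d - 1, hd1⟩)) ^ 2)
        = fun t : ℝ => (Real.arsinh (Real.sqrt (t ^ 2 + (R - z i ^ 2)) / h)) ^ 2 := by
      funext t
      have e1 : (Function.update z i t) ⟨d - 1, hd1⟩ = h := by
        rw [Function.update_of_ne hne]
      have e2 : ∑ j ∈ S, (Function.update z i t) j ^ 2 = t ^ 2 + (R - z i ^ 2) := by
        rw [← Finset.add_sum_erase S (fun j => (Function.update z i t) j ^ 2) hi,
          Function.update_self,
          Finset.sum_congr rfl
            (fun j hj => by rw [Function.update_of_ne (Finset.ne_of_mem_erase hj)])]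
        have e3 : z i ^ 2 + ∑ j ∈ S.erase i, z j ^ 2 = R := by
          rw [hR]; exact Finset.add_sum_erase S (fun j => z j ^ 2) hi
        linarith
      rw [e2, e1]
    rw [hfun, fx_deriv2 (R - z i ^ 2) h hh0 (z i) (by rw [hxc]; exact hRpos), hxc,
      ← hrdef, ← hsdef, ← hgdef]
    ring
  -- the normal direction
  have hstepD :
      deriv (deriv (fun t : ℝ =>
        (Real.arsinh (Real.sqrt (∑ j ∈ S, (Function.update z (⟨d - 1, hd1⟩ : Fin d) t) j ^ 2) /
          (Function.update z (⟨d - 1, hd1⟩ : Fin d) t) ⟨d - 1, hd1⟩)) ^ 2)) h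
      = 2 * R / (h ^ 2 * s ^ 2) + 2 * r * g * (s ^ 2 + h ^ 2) / (h ^ 2 * s ^ 3) := by
    have hfun : (fun t : ℝ =>
        (Real.arsinh (Real.sqrt (∑ j ∈ S, (Function.update z (⟨d - 1, hd1⟩ : Fin d) t) j ^ 2) /
          (Function.update z (⟨d - 1, hd1⟩ : Fin d) t) ⟨d - 1, hd1⟩)) ^ 2)
        = fun t : ℝ => (Real.arsinh (r / t)) ^ 2 := by
      funext t
      have e1 : ∑ j ∈ S, (Function.update z (⟨d - 1, hd1⟩ : Fin d) t) j ^ 2 = R := by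
        rw [hR]
        refine Finset.sum_congr rfl fun j hj => ?_
        have hjv : (j : ℕ) < d - 1 := by rw [hS] at hj; exact (Finset.mem_filter.1 hj).2
        rw [Function.update_of_ne (by simp only [ne_eq, Fin.ext_iff]; omega)]
      rw [e1, Function.update_self, ← hrdef]
    rw [hfun, fh_deriv2 r hrpos h hh0, hr2, ← hsdef, ← hgdef]
  -- assemble the sum
  have hsplit : (∑ i : Fin d,
      deriv (deriv (fun t : ℝ =>
        (Real.arsinh (Real.sqrt (∑ j ∈ S, (Function.update z i t) j ^ 2) /
          (Function.update z i t) ⟨d - 1, hd1⟩)) ^ 2)) (z i))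
      = R * (2 / (r ^ 2 * s ^ 2) - 2 * g * (s ^ 2 + r ^ 2) / (r ^ 3 * s ^ 3))
        + ((d : ℝ) - 1) * (2 * g / (r * s))
        + (2 * R / (h ^ 2 * s ^ 2) + 2 * r * g * (s ^ 2 + h ^ 2) / (h ^ 2 * s ^ 3)) := by
    rw [← Finset.sum_filter_add_sum_filter_not Finset.univ
      (fun i : Fin d => (i : ℕ) < d - 1), ← hS]
    have hnot : (Finset.univ : Finset (Fin d)).filter (fun i : Fin d => ¬ (i : ℕ) < d - 1)
        = {(⟨d - 1, hd1⟩ : Fin d)} := by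
      ext i
      simp only [mem_filter, mem_univ, true_and, Finset.mem_singleton, Fin.ext_iff]
      omega
    rw [hnot, Finset.sum_singleton, Finset.sum_congr rfl hstep, Finset.sum_add_distrib,
      ← Finset.sum_mul, Finset.sum_const, hcard, nsmul_eq_mul, ← hR, hstepD,
      Nat.cast_sub (by omega), Nat.cast_one]
  rw [hsplit]
  -- the key closed form
  have hs2' : s ^ 2 = h ^ 2 + r ^ 2 := by rw [hs2, hr2]
  clear_value S h R r s g
  have hmain : h ^ 2 * (R * (2 / (r ^ 2 * s ^ 2) - 2 * g * (s ^ 2 + r ^ 2) / (r ^ 3 * s ^ 3))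
        + ((d : ℝ) - 1) * (2 * g / (r * s))
        + (2 * R / (h ^ 2 * s ^ 2) + 2 * r * g * (s ^ 2 + h ^ 2) / (h ^ 2 * s ^ 3)))
      = 2 + 2 * (((d : ℝ) - 2) * (g * h ^ 2 / (r * s))) + 2 * (g * (r / s)) := by
    rw [← hr2]
    have hh2 : h ^ 2 = s ^ 2 - r ^ 2 := by linarith
    rw [hh2]
    have h3 : r ≠ 0 := ne_of_gt hrpos
    have h4 : s ≠ 0 := ne_of_gt hspos
    have h6 : s ^ 2 - r ^ 2 ≠ 0 := by rw [← hh2]; positivity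
    field_simp
    ring
  rw [hmain]
  clear hstep hstepD hsplit hmain hcard
  have hd2 : (2 : ℝ) ≤ (d : ℝ) := by exact_mod_cast hd
  have hgh : g * h ≤ r := by
    have h0 : 0 < r / h := div_pos hrpos hh0
    have h1 : g ≤ r / h := by
      rw [hgdef]
      calc Real.arsinh (r / h) ≤ Real.arsinh (Real.sinh (r / h)) :=
            Real.arsinh_le_arsinh.2 (Real.self_lt_sinh_iff.2 h0).le
        _ = r / h := Real.arsinh_sinh _
    calc g * h ≤ (r / h) * h := by nlinarith
      _ = r := by field_simp
  have hhs : h ≤ s := by nlinarith [hs2', sq_nonneg r, sq_nonneg (s - h)]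
  have hrs : r ≤ s := by nlinarith [hs2', sq_nonneg h, sq_nonneg (s - r)]
  have u1 : g * h ^ 2 / (r * s) ≤ 1 := by
    rw [div_le_one (by positivity)]
    calc g * h ^ 2 = (g * h) * h := by ring
      _ ≤ r * h := mul_le_mul_of_nonneg_right hgh hh0.le
      _ ≤ r * s := mul_le_mul_of_nonneg_left hhs hrpos.le
  have u2 : g * (r / s) ≤ g := by
    rw [mul_div_assoc', div_le_iff₀ hspos]
    exact mul_le_mul_of_nonneg_left hrs hg0
  have t1 : 0 ≤ g * h ^ 2 / (r * s) := by positivity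
  have t2 : 0 ≤ g * (r / s) := by positivity
  have v1 : (d : ℝ) - 2 ≥ 0 := by linarith
  have w1 : 0 ≤ ((d : ℝ) - 2) * (g * h ^ 2 / (r * s)) := mul_nonneg v1 t1
  have w2 : ((d : ℝ) - 2) * (g * h ^ 2 / (r * s)) ≤ ((d : ℝ) - 2) * 1 :=
    mul_le_mul_of_nonneg_left u1 v1
  constructor
  · linarith
  · linarith
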